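/- Let d ≥ 1, let F : ℝ^d → ℂ be Lebesgue integrable, let ξ ∈ ℝ^d, and let s ∈ ℂ with Re s > 0. Then the function (t, x) ↦ e^{−i ξ·x − s t} t^{−d} F(x/t) is integrable on (0, ∞) × ℝ^d, and ∫₀^∞ ∫_{ℝ^d} e^{−i ξ·x − s t} t^{−d} F(x/t) dx dt = ∫_{ℝ^d} F(y) / (s + i ξ·y) dy. -/

import Mathlib

open MeasureTheory Set Filter Complex

private lemma norm_cexp_aux (a : ℂ) (t : ℝ) :
    ‖Complex.exp (-(a * t))‖ = Real.exp (-(a.re * t)) := by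
  rw [Complex.norm_exp]
  congr 1
  simp [Complex.mul_re]

private lemma integrableOn_cexp_aux {a : ℂ} (ha : 0 < a.re) :
    IntegrableOn (fun t : ℝ => Complex.exp (-(a * t))) (Ioi 0) := by
  refine (exp_neg_integrableOn_Ioi 0 ha).mono' ?_ ?_
  · exact (Complex.continuous_exp.comp
      ((continuous_const.mul Complex.continuous_ofReal).neg)).aestronglyMeasurable
  · filter_upwards with t
    rw [norm_cexp_aux]
    simp [neg_mul]

private lemma integral_cexp_aux {a : ℂ} (ha : 0 < a.re) :
    ∫ t in Ioi (0 : ℝ), Complex.exp (-(a * t)) = a⁻¹ := by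
  have ha' : a ≠ 0 := fun h => by simp [h] at ha
  have hderiv : ∀ x ∈ Ioi (0:ℝ), HasDerivAt (fun t : ℝ => -a⁻¹ * Complex.exp (-(a * t)))
      (Complex.exp (-(a * x))) x := by
    intro x _
    have h1 : HasDerivAt (fun t : ℝ => -(a * (t : ℂ))) (-a) x := by
      simpa using ((hasDerivAt_id (x : ℂ)).const_mul a).neg.comp_ofReal
    have h2 := (h1.cexp).const_mul (-a⁻¹)
    refine h2.congr_deriv ?_
    rw [mul_comm (Complex.exp _) (-a), ← mul_assoc, neg_mul_neg, inv_mul_cancel₀ ha', one_mul]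
  have htend : Tendsto (fun t : ℝ => -a⁻¹ * Complex.exp (-(a * t))) atTop (nhds 0) := by
    rw [show (0 : ℂ) = -a⁻¹ * 0 by ring]
    apply Tendsto.const_mul
    rw [tendsto_zero_iff_norm_tendsto_zero]
    have h3 : (fun t : ℝ => ‖Complex.exp (-(a * t))‖) = fun t : ℝ => Real.exp (-(a.re * t)) := by
      funext t; exact norm_cexp_aux a t
    rw [h3]
    have h4 : Tendsto (fun t : ℝ => -(a.re * t)) atTop atBot := by
      apply tendsto_neg_atBot_iff.mpr
      exact Tendsto.const_mul_atTop ha tendsto_id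
    exact Real.tendsto_exp_atBot.comp h4
  have hcont : ContinuousWithinAt (fun t : ℝ => -a⁻¹ * Complex.exp (-(a * t))) (Ici 0) 0 := by
    apply Continuous.continuousWithinAt
    exact continuous_const.mul (Complex.continuous_exp.comp
      ((continuous_const.mul Complex.continuous_ofReal).neg))
  have := integral_Ioi_of_hasDerivAt_of_tendsto hcont hderiv (integrableOn_cexp_aux ha) htend
  rw [this]
  simp [Complex.exp_zero]

/-- The iterated Fourier (in `x`) and Laplace (in `t`) transform of the self-similar
profile `t^{−d} F(x/t)`: the function `(t, x) ↦ e^{−i ξ·x − s t} t^{−d} F(x/t)` is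
integrable on `(0, ∞) × ℝ^d`, and
`∫₀^∞ ∫_{ℝ^d} e^{−i ξ·x − s t} t^{−d} F(x/t) dx dt = ∫_{ℝ^d} F(y)/(s + i ξ·y) dy`. -/
theorem stmt2 (d : ℕ) (hd : 1 ≤ d)
    (F : EuclideanSpace ℝ (Fin d) → ℂ) (hF : Integrable F)
    (ξ : EuclideanSpace ℝ (Fin d)) (s : ℂ) (hs : 0 < s.re) :
    IntegrableOn
      (fun p : ℝ × EuclideanSpace ℝ (Fin d) =>
        Complex.exp (-(Complex.I * ((inner ℝ ξ p.2 : ℝ) : ℂ)) - s * (p.1 : ℂ)) *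
          ((p.1 : ℂ) ^ d)⁻¹ * F (p.1⁻¹ • p.2))
      (Ioi (0 : ℝ) ×ˢ univ) ∧
    ∫ t in Ioi (0 : ℝ), ∫ x : EuclideanSpace ℝ (Fin d),
        Complex.exp (-(Complex.I * ((inner ℝ ξ x : ℝ) : ℂ)) - s * (t : ℂ)) *
          ((t : ℂ) ^ d)⁻¹ * F (t⁻¹ • x)
      = ∫ y : EuclideanSpace ℝ (Fin d), F y / (s + Complex.I * ((inner ℝ ξ y : ℝ) : ℂ)) := by
  have hE : Module.finrank ℝ (EuclideanSpace ℝ (Fin d)) = d := finrank_euclideanSpace_fin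
  set μ : Measure (ℝ × EuclideanSpace ℝ (Fin d)) := (volume.restrict (Ioi 0)).prod volume with hμ
  have hmeq : volume.restrict (Ioi (0:ℝ) ×ˢ (univ : Set (EuclideanSpace ℝ (Fin d)))) = μ := by
    rw [hμ, Measure.volume_eq_prod, ← Measure.prod_restrict, Measure.restrict_univ]
  -- norm of the exponential factor
  have hnorm : ∀ (c t : ℝ), ‖Complex.exp (-(Complex.I * (c : ℂ)) - s * (t : ℂ))‖
      = Real.exp (-(s.re * t)) := by
    intro c t
    rw [Complex.norm_exp]
    congr 1
    simp [Complex.mul_re]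
  -- measurability of the main integrand
  have hΦmeas : Measurable (fun p : ℝ × EuclideanSpace ℝ (Fin d) => p.1⁻¹ • p.2) :=
    (continuous_smul.measurable).comp (measurable_fst.inv.prodMk measurable_snd)
  have hqmp : Measure.QuasiMeasurePreserving (fun p : ℝ × EuclideanSpace ℝ (Fin d) => p.1⁻¹ • p.2) μ volume := by
    refine ⟨hΦmeas, Measure.AbsolutelyContinuous.mk fun A hA hA0 => ?_⟩
    rw [Measure.map_apply hΦmeas hA, hμ, Measure.prod_apply (hΦmeas hA)]
    have h0 : ∀ t ∈ Ioi (0:ℝ),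
        volume (Prod.mk t ⁻¹' ((fun p : ℝ × EuclideanSpace ℝ (Fin d) => p.1⁻¹ • p.2) ⁻¹' A)) = 0 := by
      intro t ht
      have h1 : (Prod.mk t ⁻¹' ((fun p : ℝ × EuclideanSpace ℝ (Fin d) => p.1⁻¹ • p.2) ⁻¹' A)) = (t⁻¹ • ·) ⁻¹' A := rfl
      rw [h1, Measure.addHaar_preimage_smul volume (inv_ne_zero (ne_of_gt ht)), hA0, mul_zero]
    rw [setLIntegral_congr_fun measurableSet_Ioi h0]
    simp
  have hGmeas : AEStronglyMeasurable
      (fun p : ℝ × EuclideanSpace ℝ (Fin d) =>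
        Complex.exp (-(Complex.I * ((inner ℝ ξ p.2 : ℝ) : ℂ)) - s * (p.1 : ℂ)) *
          ((p.1 : ℂ) ^ d)⁻¹ * F (p.1⁻¹ • p.2)) μ := by
    refine AEStronglyMeasurable.mul (AEStronglyMeasurable.mul ?_ ?_)
      (hF.aestronglyMeasurable.comp_quasiMeasurePreserving hqmp)
    · apply Continuous.aestronglyMeasurable
      apply Complex.continuous_exp.comp
      apply Continuous.sub
      · exact (continuous_const.mul (Complex.continuous_ofReal.comp
          (continuous_const.inner continuous_snd))).neg
      · exact continuous_const.mul (Complex.continuous_ofReal.comp continuous_fst)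
    · exact (((Complex.measurable_ofReal.comp measurable_fst).pow_const d).inv).aestronglyMeasurable
  -- integrability of the main integrand
  have hGint : Integrable
      (fun p : ℝ × EuclideanSpace ℝ (Fin d) =>
        Complex.exp (-(Complex.I * ((inner ℝ ξ p.2 : ℝ) : ℂ)) - s * (p.1 : ℂ)) *
          ((p.1 : ℂ) ^ d)⁻¹ * F (p.1⁻¹ • p.2)) μ := by
    rw [hμ, integrable_prod_iff hGmeas]
    constructor
    · filter_upwards [ae_restrict_mem measurableSet_Ioi] with t ht
      have hI1 : Integrable (fun x : EuclideanSpace ℝ (Fin d) => F (t⁻¹ • x)) := hF.comp_smul (inv_ne_zero (ne_of_gt ht))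
      refine hI1.bdd_mul (c := Real.exp (-(s.re * t)) * (t ^ d)⁻¹) ?_ ?_
      · apply Continuous.aestronglyMeasurable
        apply Continuous.mul ?_ continuous_const
        apply Complex.continuous_exp.comp
        exact ((continuous_const.mul (Complex.continuous_ofReal.comp
          (continuous_const.inner continuous_id))).neg).sub continuous_const
      · refine Eventually.of_forall fun x => ?_
        rw [norm_mul, hnorm]
        gcongr
        rw [norm_inv, norm_pow, Complex.norm_real, Real.norm_eq_abs, abs_of_pos ht]
    · -- the iterated norm integral
      have hbase : Integrable (fun t : ℝ => Real.exp (-s.re * t) * ∫ x : EuclideanSpace ℝ (Fin d), ‖F x‖)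
          (volume.restrict (Ioi 0)) := (exp_neg_integrableOn_Ioi 0 hs).mul_const _
      refine hbase.congr ?_
      filter_upwards [ae_restrict_mem measurableSet_Ioi] with t ht
      have htd : (0:ℝ) < t ^ d := pow_pos ht d
      have h1 : (fun x : EuclideanSpace ℝ (Fin d) => ‖Complex.exp (-(Complex.I * ((inner ℝ ξ x : ℝ) : ℂ)) - s * (t : ℂ)) *
          ((t : ℂ) ^ d)⁻¹ * F (t⁻¹ • x)‖)
          = fun x : EuclideanSpace ℝ (Fin d) => (Real.exp (-(s.re * t)) * (t ^ d)⁻¹) * ‖F (t⁻¹ • x)‖ := by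
        funext x
        rw [norm_mul, norm_mul, hnorm, norm_inv, norm_pow, Complex.norm_real, Real.norm_eq_abs,
          abs_of_pos ht]
      rw [h1, integral_const_mul]
      have h2 : ∫ x : EuclideanSpace ℝ (Fin d), ‖F (t⁻¹ • x)‖ = t ^ d * ∫ x : EuclideanSpace ℝ (Fin d), ‖F x‖ := by
        have := Measure.integral_comp_inv_smul_of_nonneg (volume : Measure (EuclideanSpace ℝ (Fin d)))
          (fun y => ‖F y‖) (le_of_lt ht)
        rw [this, hE, smul_eq_mul]
      rw [h2]
      rw [← mul_assoc, mul_assoc _ _ (t ^ d), inv_mul_cancel₀ (ne_of_gt htd), mul_one, neg_mul]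
  have hG1 : IntegrableOn
      (fun p : ℝ × EuclideanSpace ℝ (Fin d) =>
        Complex.exp (-(Complex.I * ((inner ℝ ξ p.2 : ℝ) : ℂ)) - s * (p.1 : ℂ)) *
          ((p.1 : ℂ) ^ d)⁻¹ * F (p.1⁻¹ • p.2)) (Ioi (0:ℝ) ×ˢ (univ : Set (EuclideanSpace ℝ (Fin d)))) := by
    rw [IntegrableOn, hmeq]; exact hGint
  refine ⟨hG1, ?_⟩
  -- step B: evaluate the inner x-integral for each t > 0
  have hB : ∀ t ∈ Ioi (0:ℝ),
      (∫ x : EuclideanSpace ℝ (Fin d), Complex.exp (-(Complex.I * ((inner ℝ ξ x : ℝ) : ℂ)) - s * (t : ℂ)) *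
          ((t : ℂ) ^ d)⁻¹ * F (t⁻¹ • x))
      = ∫ y : EuclideanSpace ℝ (Fin d), Complex.exp (-((s + Complex.I * ((inner ℝ ξ y : ℝ) : ℂ)) * (t : ℂ))) * F y := by
    intro t ht
    have htd : ((t : ℂ)) ^ d ≠ 0 := pow_ne_zero _ (by exact_mod_cast ne_of_gt ht)
    have h1 : (fun x : EuclideanSpace ℝ (Fin d) => Complex.exp (-(Complex.I * ((inner ℝ ξ x : ℝ) : ℂ)) - s * (t : ℂ)) *
          ((t : ℂ) ^ d)⁻¹ * F (t⁻¹ • x))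
        = fun x : EuclideanSpace ℝ (Fin d) => (fun y : EuclideanSpace ℝ (Fin d) =>
            Complex.exp (-(Complex.I * ((inner ℝ ξ (t • y) : ℝ) : ℂ)) - s * (t : ℂ)) *
              ((t : ℂ) ^ d)⁻¹ * F y) (t⁻¹ • x) := by
      funext x
      simp only [smul_inv_smul₀ (ne_of_gt (mem_Ioi.mp ht))]
    have h2 := Measure.integral_comp_inv_smul_of_nonneg
      (volume : Measure (EuclideanSpace ℝ (Fin d)))
      (fun y : EuclideanSpace ℝ (Fin d) =>
        Complex.exp (-(Complex.I * ((inner ℝ ξ (t • y) : ℝ) : ℂ)) - s * (t : ℂ)) *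
          ((t : ℂ) ^ d)⁻¹ * F y) (le_of_lt (mem_Ioi.mp ht))
    rw [h1, h2, hE, ← integral_smul]
    congr 1
    funext y
    rw [real_inner_smul_right]
    rw [show ((t:ℝ) ^ d) • (Complex.exp (-(Complex.I * ((t * inner ℝ ξ y : ℝ) : ℂ)) - s * (t : ℂ)) *
        ((t : ℂ) ^ d)⁻¹ * F y)
      = ((((t:ℝ) ^ d : ℝ) : ℂ)) * (Complex.exp (-(Complex.I * ((t * inner ℝ ξ y : ℝ) : ℂ))
        - s * (t : ℂ)) * ((t : ℂ) ^ d)⁻¹ * F y) from by rw [Complex.real_smul]]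
    push_cast
    rw [show -(Complex.I * ((t:ℂ) * ((inner ℝ ξ y : ℝ) : ℂ))) - s * (t:ℂ)
        = -((s + Complex.I * ((inner ℝ ξ y : ℝ) : ℂ)) * (t:ℂ)) from by ring]
    field_simp
  rw [setIntegral_congr_fun measurableSet_Ioi hB]
  -- step C: Fubini and the Laplace integral
  have hKint : Integrable
      (fun p : ℝ × EuclideanSpace ℝ (Fin d) =>
        Complex.exp (-((s + Complex.I * ((inner ℝ ξ p.2 : ℝ) : ℂ)) * (p.1 : ℂ))) * F p.2) μ := by
    have hbase : Integrable (fun p : ℝ × EuclideanSpace ℝ (Fin d) => Real.exp (-s.re * p.1) * ‖F p.2‖) μ :=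
      Integrable.mul_prod (exp_neg_integrableOn_Ioi 0 hs) hF.norm
    refine hbase.mono' ?_ ?_
    · refine AEStronglyMeasurable.mul ?_ (hF.aestronglyMeasurable.comp_snd)
      apply Continuous.aestronglyMeasurable
      apply Complex.continuous_exp.comp
      apply Continuous.neg
      exact (continuous_const.add (continuous_const.mul (Complex.continuous_ofReal.comp
        (continuous_const.inner continuous_snd)))).mul
        (Complex.continuous_ofReal.comp continuous_fst)
    · filter_upwards with p
      rw [norm_mul, norm_cexp_aux]
      have h2 : (s + Complex.I * ((inner ℝ ξ p.2 : ℝ) : ℂ)).re = s.re := by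
        simp [Complex.add_re, Complex.mul_re]
      rw [h2, neg_mul]
  have hswap := integral_integral_swap
    (f := fun (t : ℝ) (y : EuclideanSpace ℝ (Fin d)) =>
      Complex.exp (-((s + Complex.I * ((inner ℝ ξ y : ℝ) : ℂ)) * (t : ℂ))) * F y) hKint
  rw [hswap]
  refine integral_congr_ae (Eventually.of_forall fun y => ?_)
  have hre : (0:ℝ) < (s + Complex.I * ((inner ℝ ξ y : ℝ) : ℂ)).re := by
    have h2 : (s + Complex.I * ((inner ℝ ξ y : ℝ) : ℂ)).re = s.re := by
      simp [Complex.add_re, Complex.mul_re]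
    rw [h2]; exact hs
  simp only []
  rw [integral_mul_const, integral_cexp_aux hre, inv_mul_eq_div]
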